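/- For all natural numbers j, n with 1 ≤ j ≤ n - 1 (so that all indices are nonnegative), J_{n-1} = J_j·J_{n-j} + 2·J_{j-1}·J_{n-j-1}, where J denotes the Jacobsthal sequence. -/
import Mathlib


def J : ℕ → ℤ
  | 0 => 0
  | 1 => 1
  | (n+2) => J (n+1) + 2 * J n

lemma J_add (a : ℕ) : ∀ b, J (a+b+1) = J (a+1) * J (b+1) + 2 * J a * J b := by
  induction a using Nat.twoStepInduction with
  | zero => intro b; simp [J]
  | one => intro b; rw [show 1+b+1 = b+2 from by ring]; simp [J]
  | more a ih1 ih2 =>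
    intro b
    have h1 := ih1 b
    have h2 := ih2 b
    rw [show a+2+b+1 = a+b+3 from by ring, show a+2+1 = a+3 from by ring]
    have e1 : J (a+b+3) = J (a+b+2) + 2 * J (a+b+1) := by simp [J]
    have e2 : J (a+3) = J (a+2) + 2 * J (a+1) := by simp [J]
    have e3 : J (a+2) = J (a+1) + 2 * J a := by simp [J]
    have h1' : J (a+b+2) = J (a+2) * J (b+1) + 2 * J (a+1) * J b := by
      have : a + 1 + b + 1 = a + b + 2 := by ring
      rw [this] at h2; convert h2 using 3 <;> ring_nf
    rw [e1, h1', h1, e2, e3]; ring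

theorem jacobsthal_split (j n : ℕ) (hj : 1 ≤ j) (hjn : j ≤ n - 1) :
    J (n-1) = J j * J (n-j) + 2 * J (j-1) * J (n-j-1) := by
  obtain ⟨a, rfl⟩ : ∃ a, j = a + 1 := ⟨j-1, by omega⟩
  obtain ⟨b, hb⟩ : ∃ b, n = a + b + 2 := ⟨n - a - 2, by omega⟩
  subst hb
  have h1 : a + b + 2 - 1 = a + b + 1 := by omega
  have h2 : a + b + 2 - (a+1) = b + 1 := by omega
  have h3 : a + 1 - 1 = a := by omega
  have h4 : a + b + 2 - (a+1) - 1 = b := by omega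
  rw [h1, h2, h3]; norm_num; rw [J_add]
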